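/- Let ε₀ > 0, Δt > 0, let a be a symmetric positive definite d×d real matrix with a ≽ ε₀·I_d, let H be an ℝ^d-valued square-integrable random variable with E[H] = 0 and E[HHᵀ] = a·Δt, and let v : ℝ^d → ℝ be L-Lipschitz with v(x+H) integrable. Then for every x ∈ ℝ^d, |E[v(x+H)·a^{−1}H]| ≤ (L/ε₀)·Tr(a)·Δt. In particular, (Δt)^{−1}·|E[v(x+H)·a^{−1}H]| ≤ L·d·‖a‖/ε₀. -/

import Mathlib

open MeasureTheory ProbabilityTheory Matrix Real

noncomputable section

abbrev Vec (d : ℕ) : Type := EuclideanSpace ℝ (Fin d)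
abbrev Mat (d : ℕ) : Type := Matrix (Fin d) (Fin d) ℝ

/-- Matrix-vector product, valued in Euclidean space. -/
def matVec {d : ℕ} (a : Mat d) (v : Vec d) : Vec d := WithLp.toLp 2 (fun i => ∑ j, a i j * v j)

/-- matVec as a continuous linear map. -/
def matVecCLM {d : ℕ} (a : Mat d) : Vec d →L[ℝ] Vec d :=
  LinearMap.toContinuousLinearMap
  { toFun := matVec a
    map_add' := by
      intro u w; ext i
      simp [matVec, mul_add, Finset.sum_add_distrib]
    map_smul' := by
      intro c u; ext i
      simp [matVec, Finset.mul_sum, mul_left_comm] }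

lemma dot_eq_inner {d : ℕ} (z y : Vec d) : (z : Fin d → ℝ) ⬝ᵥ y = (inner ℝ z y : ℝ) := by
  simp [dotProduct, PiLp.inner_apply, RCLike.inner_apply, mul_comm]

lemma inv_bound {d : ℕ} (ε₀ : ℝ) (hε₀ : 0 < ε₀) (a : Mat d)
    (ha_lb : (a - ε₀ • (1 : Mat d)).PosSemidef) (y : Vec d) :
    ‖matVec a⁻¹ y‖ ≤ ε₀⁻¹ * ‖y‖ := by
  have hpd : a.PosDef := by
    have h1 : ((ε₀ • (1 : Mat d)) + (a - ε₀ • (1 : Mat d))).PosDef := by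
      refine Matrix.PosDef.add_posSemidef ?_ ha_lb
      rw [Matrix.smul_one_eq_diagonal]
      exact Matrix.posDef_diagonal_iff.mpr (fun _ => hε₀)
    simpa using h1
  set z : Vec d := matVec a⁻¹ y with hz
  have hay : a.mulVec z = y := by
    have : a.mulVec ((a⁻¹ : Mat d).mulVec y) = y := by
      rw [Matrix.mulVec_mulVec, Matrix.mul_nonsing_inv _ (isUnit_iff_ne_zero.mpr hpd.det_pos.ne'),
        Matrix.one_mulVec]
    exact this
  have key : ε₀ * ‖z‖ ^ 2 ≤ ‖z‖ * ‖y‖ := by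
    have h0 : 0 ≤ (z : Fin d → ℝ) ⬝ᵥ ((a - ε₀ • (1 : Mat d)).mulVec z) := by
      simpa using ha_lb.dotProduct_mulVec_nonneg z
    have h1 : (z : Fin d → ℝ) ⬝ᵥ ((a - ε₀ • (1 : Mat d)).mulVec z)
        = z ⬝ᵥ a.mulVec z - ε₀ * (z ⬝ᵥ z) := by
      simp [Matrix.sub_mulVec, Matrix.smul_mulVec, Matrix.one_mulVec, dotProduct_sub,
        dotProduct_smul, smul_eq_mul]
    have h2 : (z : Fin d → ℝ) ⬝ᵥ z = ‖z‖ ^ 2 := by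
      rw [dot_eq_inner]; exact real_inner_self_eq_norm_sq z
    have h3 : (z : Fin d → ℝ) ⬝ᵥ a.mulVec z = (inner ℝ z y : ℝ) := by
      rw [hay, dot_eq_inner]
    have h4 : (inner ℝ z y : ℝ) ≤ ‖z‖ * ‖y‖ := real_inner_le_norm z y
    nlinarith [h0, h1, h2, h3, h4]
  rcases eq_or_ne ‖z‖ 0 with h | h
  · rw [h]; positivity
  · have hzpos : 0 < ‖z‖ := lt_of_le_of_ne (norm_nonneg z) (Ne.symm h)
    have h5 : ε₀ * ‖z‖ ≤ ‖y‖ := by nlinarith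
    calc ‖z‖ = ε₀⁻¹ * (ε₀ * ‖z‖) := by field_simp
      _ ≤ ε₀⁻¹ * ‖y‖ := by
          have : (0:ℝ) ≤ ε₀⁻¹ := by positivity
          nlinarith


/-- **Uniform bound for the discrete gradient approximation.**
Let `ε₀ > 0`, `Δt > 0`, `a ≽ ε₀·I_d` symmetric, and let `H` be a centered,
square-integrable `ℝ^d`-valued random variable with `E[HHᵀ] = a·Δt`.  If `v` is
`L`-Lipschitz and `v(x+H)` is integrable then
`|E[v(x+H)·a⁻¹H]| ≤ (L/ε₀)·Tr(a)·Δt`, and in particular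
`Δt⁻¹·|E[v(x+H)·a⁻¹H]| ≤ L·d·‖a‖/ε₀` (here `na` is any bound on the operator
quadratic form of `a`, as is the case for `na = ‖a‖`). -/
theorem discrete_gradient_bound
    (d : ℕ) (hd : 1 ≤ d) (ε₀ Δt L na : ℝ) (hε₀ : 0 < ε₀) (hΔt : 0 < Δt)
    (hL : 0 ≤ L) (hna : 0 ≤ na)
    (a : Mat d) (ha_lb : (a - ε₀ • (1 : Mat d)).PosSemidef)
    (hna_ub : ∀ x : Fin d → ℝ, x ⬝ᵥ a.mulVec x ≤ na * (x ⬝ᵥ x))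
    (Ω : Type) [MeasurableSpace Ω] (P : Measure Ω) [IsProbabilityMeasure P]
    (H : Ω → Vec d) (hHmeas : Measurable H) (hH2 : MemLp H 2 P)
    (hmean : (∫ ω, H ω ∂P) = 0)
    (hcov : ∀ i j : Fin d, (∫ ω, H ω i * H ω j ∂P) = a i j * Δt)
    (v : Vec d → ℝ) (hv : ∀ x y : Vec d, |v x - v y| ≤ L * ‖x - y‖)
    (x : Vec d) (hint : Integrable (fun ω => v (x + H ω)) P) :
    ‖∫ ω, v (x + H ω) • matVec a⁻¹ (H ω) ∂P‖ ≤ (L / ε₀) * a.trace * Δt ∧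
    Δt⁻¹ * ‖∫ ω, v (x + H ω) • matVec a⁻¹ (H ω) ∂P‖ ≤ L * d * na / ε₀ := by
  have hbnd : ∀ y : Vec d, ‖matVec a⁻¹ y‖ ≤ ε₀⁻¹ * ‖y‖ := inv_bound ε₀ hε₀ a ha_lb
  have hHint : Integrable H P := hH2.integrable one_le_two
  -- integral of matVec a⁻¹ ∘ H vanishes
  have hgint : Integrable (fun ω => matVec a⁻¹ (H ω)) P :=
    (matVecCLM (d := d) a⁻¹).integrable_comp hHint
  have hg0 : (∫ ω, matVec a⁻¹ (H ω) ∂P) = 0 := by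
    have h := (matVecCLM (d := d) a⁻¹).integral_comp_comm hHint
    rw [hmean, map_zero] at h
    exact h
  -- v is continuous
  have hlip : LipschitzWith (Real.toNNReal L) v := by
    apply LipschitzWith.of_dist_le_mul
    intro p q
    rw [Real.dist_eq, dist_eq_norm]
    calc |v p - v q| ≤ L * ‖p - q‖ := hv p q
      _ = (Real.toNNReal L : ℝ) * ‖p - q‖ := by rw [Real.coe_toNNReal L hL]
  -- the shifted integrand
  set f : Ω → Vec d := fun ω => (v (x + H ω) - v x) • matVec a⁻¹ (H ω) with hf
  have hfmeas : AEStronglyMeasurable f P := by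
    apply Measurable.aestronglyMeasurable
    exact ((hlip.continuous.measurable.comp (hHmeas.const_add x)).sub measurable_const).smul
      ((matVecCLM (d := d) a⁻¹).continuous.measurable.comp hHmeas)
  have hfbound : ∀ ω, ‖f ω‖ ≤ (L * ε₀⁻¹) * ‖H ω‖ ^ 2 := by
    intro ω
    rw [hf, norm_smul, Real.norm_eq_abs]
    have h1 : |v (x + H ω) - v x| ≤ L * ‖H ω‖ := by
      have := hv (x + H ω) x
      simpa [add_sub_cancel_left] using this
    have h2 := hbnd (H ω)
    calc |v (x + H ω) - v x| * ‖matVec a⁻¹ (H ω)‖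
        ≤ (L * ‖H ω‖) * (ε₀⁻¹ * ‖H ω‖) := by
          apply mul_le_mul h1 h2 (norm_nonneg _)
          positivity
      _ = (L * ε₀⁻¹) * ‖H ω‖ ^ 2 := by ring
  have hnormsq : Integrable (fun ω => ‖H ω‖ ^ 2) P := by
    have h := hH2.integrable_norm_rpow (by norm_num) (by norm_num)
    simp only [ENNReal.toReal_ofNat] at h
    convert h using 2 with ω
    rw [← Real.rpow_natCast ‖H ω‖ 2]
    norm_num
  have hfint : Integrable f P :=
    Integrable.mono' (hnormsq.const_mul (L * ε₀⁻¹)) hfmeas (ae_of_all _ hfbound)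
  -- splitting the integral
  have hsplit : (fun ω => v (x + H ω) • matVec a⁻¹ (H ω))
      = fun ω => f ω + v x • matVec a⁻¹ (H ω) := by
    funext ω
    rw [hf, ← add_smul, sub_add_cancel]
  have hIeq : (∫ ω, v (x + H ω) • matVec a⁻¹ (H ω) ∂P) = ∫ ω, f ω ∂P := by
    have hg2 : Integrable (fun ω => v x • matVec a⁻¹ (H ω)) P := hgint.smul (v x)
    rw [hsplit, integral_add hfint hg2, integral_smul, hg0, smul_zero, add_zero]
  -- second moment identity
  have hco : ∀ i : Fin d, MemLp (fun ω => H ω i) 2 P := by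
    intro i
    exact (EuclideanSpace.proj i : Vec d →L[ℝ] ℝ).comp_memLp' hH2
  have hsqi : ∀ i : Fin d, Integrable (fun ω => H ω i * H ω i) P := by
    intro i
    simpa [pow_two] using (hco i).integrable_sq
  have hEsq : (∫ ω, ‖H ω‖ ^ 2 ∂P) = a.trace * Δt := by
    have hnorm : ∀ ω, ‖H ω‖ ^ 2 = ∑ i, H ω i * H ω i := by
      intro ω
      rw [← real_inner_self_eq_norm_sq]
      simp only [PiLp.inner_apply, RCLike.inner_apply, conj_trivial]
    simp_rw [hnorm]
    rw [integral_finset_sum _ (fun i _ => hsqi i)]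
    simp only [hcov]
    rw [Matrix.trace, Finset.sum_mul]
    rfl
  -- main estimate
  have hmain : ‖∫ ω, v (x + H ω) • matVec a⁻¹ (H ω) ∂P‖ ≤ (L / ε₀) * a.trace * Δt := by
    rw [hIeq]
    calc ‖∫ ω, f ω ∂P‖ ≤ ∫ ω, ‖f ω‖ ∂P := norm_integral_le_integral_norm _
      _ ≤ ∫ ω, (L * ε₀⁻¹) * ‖H ω‖ ^ 2 ∂P :=
          integral_mono hfint.norm (hnormsq.const_mul _) hfbound
      _ = (L * ε₀⁻¹) * ∫ ω, ‖H ω‖ ^ 2 ∂P := integral_const_mul _ _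
      _ = (L / ε₀) * a.trace * Δt := by rw [hEsq]; ring
  refine ⟨hmain, ?_⟩
  -- trace bound
  have hdiag : ∀ i : Fin d, a i i ≤ na := by
    intro i
    have h := hna_ub (Pi.single i 1)
    simpa [Matrix.mulVec_single, dotProduct_single] using h
  have htr : a.trace ≤ d * na := by
    rw [Matrix.trace]
    calc ∑ i, a.diag i ≤ ∑ _i : Fin d, na := Finset.sum_le_sum (fun i _ => hdiag i)
      _ = d * na := by simp [mul_comm]
  have htrpos : 0 ≤ a.trace := by
    rw [Matrix.trace]
    apply Finset.sum_nonneg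
    intro i _
    have h := ha_lb.dotProduct_mulVec_nonneg (Pi.single i 1)
    have h2 : (Pi.single i 1 : Fin d → ℝ) ⬝ᵥ ((a - ε₀ • (1 : Mat d)).mulVec (Pi.single i 1))
        = a i i - ε₀ := by
      simp [Matrix.sub_mulVec, Matrix.smul_mulVec, Matrix.one_mulVec,
        Matrix.mulVec_single, dotProduct_single, dotProduct_sub, dotProduct_smul, smul_eq_mul]
    simp only [star_trivial] at h
    rw [h2] at h
    simp only [Matrix.diag]
    linarith
  calc Δt⁻¹ * ‖∫ ω, v (x + H ω) • matVec a⁻¹ (H ω) ∂P‖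
      ≤ Δt⁻¹ * ((L / ε₀) * a.trace * Δt) := by
        apply mul_le_mul_of_nonneg_left hmain
        positivity
    _ = (L / ε₀) * a.trace := by field_simp
    _ ≤ (L / ε₀) * (d * na) := by
        apply mul_le_mul_of_nonneg_left htr
        positivity
    _ = L * d * na / ε₀ := by ring
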